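/- arXiv:1607.07029 — 2 statements merged into one kernel-verified Lean document; each statement's English description precedes it below -/
import Mathlib

section
/- Let E ⊆ ℝⁿ (n ≥ 2), let α ≥ 0, let 1 ≤ k < n, and let π_k : ℝⁿ → ℝᵏ be the projection onto the first k coordinates. If the (k+α)-dimensional Hausdorff measure of E is zero, then for ℋᵏ-almost every x ∈ ℝᵏ, the α-dimensional Hausdorff measure of E ∩ π_k⁻¹(x) is zero. -/
noncomputable section
open MeasureTheory Metric Filter Topology Set
open scoped ENNReal

/-- ℝⁿ as Euclidean space. -/
abbrev En (n : ℕ) := EuclideanSpace ℝ (Fin n)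

/-- First partial derivative in direction `j`. -/
def pd {n : ℕ} (j : Fin n) (u : En n → ℝ) (x : En n) : ℝ :=
  fderiv ℝ u x (EuclideanSpace.single j 1)

/-- Second pure partial derivative ∂²u/∂x_j². -/
def partial2 {n : ℕ} (j : Fin n) (u : En n → ℝ) (x : En n) : ℝ :=
  fderiv ℝ (fun y => fderiv ℝ u y (EuclideanSpace.single j 1)) x (EuclideanSpace.single j 1)

/-- Laplacian Σ_j ∂²u/∂x_j². -/
def lapAt {n : ℕ} (u : En n → ℝ) (x : En n) : ℝ := ∑ j : Fin n, partial2 j u x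

/-- Real-valued subharmonicity on a set: upper semicontinuous, locally integrable,
and satisfying the sub-mean-value inequality over closed balls. -/
def SubhR {F : Type*} [NormedAddCommGroup F] [MeasureSpace F] (u : F → ℝ) (s : Set F) : Prop :=
  UpperSemicontinuousOn u s ∧ LocallyIntegrableOn u s volume ∧
  ∀ x ∈ s, ∀ r > 0, closedBall x r ⊆ s → u x ≤ ⨍ y in closedBall x r, u y

/-- `[-∞,∞)`-valued subharmonicity: upper semicontinuous, nowhere `+∞`, finite a.e.,
locally integrable, and satisfying the sub-mean-value inequality over closed balls. -/
def SubhE {F : Type*} [NormedAddCommGroup F] [MeasureSpace F] (u : F → EReal) (s : Set F) : Prop :=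
  UpperSemicontinuousOn u s ∧ (∀ x ∈ s, u x ≠ ⊤) ∧
  (∀ᵐ x ∂(volume.restrict s), u x ≠ ⊥) ∧
  LocallyIntegrableOn (fun x => (u x).toReal) s volume ∧
  ∀ x ∈ s, ∀ r > 0, closedBall x r ⊆ s →
    u x ≤ (↑(⨍ y in closedBall x r, (u y).toReal) : EReal)

/-- Harmonic on a set: C² with vanishing Laplacian. -/
def HarmOn {n : ℕ} (u : En n → ℝ) (s : Set (En n)) : Prop :=
  ContDiffOn ℝ 2 u s ∧ ∀ x ∈ s, lapAt u x = 0

/-- Insert `t` in coordinate `j`, with remaining coordinates `X`:  x = (x_j, X_j). -/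
def ins {n : ℕ} (j : Fin n) (t : ℝ) (X : EuclideanSpace ℝ {i : Fin n // i ≠ j}) : En n :=
  WithLp.toLp 2 (fun i => if h : i = j then t else X ⟨i, h⟩)

/-- The slice A(X_j) = { t ∈ ℝ : (t, X_j) ∈ A }. -/
def sliceAt {n : ℕ} (j : Fin n) (A : Set (En n)) (X : EuclideanSpace ℝ {i : Fin n // i ≠ j}) :
    Set ℝ := {t : ℝ | ins j t X ∈ A}

lemma proj_lipschitz {n k : ℕ} (hkn : k < n) :
    LipschitzWith (α := En n) (β := En k) 1
      (fun z => WithLp.toLp 2 (fun i : Fin k => z ⟨i.1, lt_trans i.2 hkn⟩)) := by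
  apply LipschitzWith.of_dist_le_mul
  intro z w
  rw [NNReal.coe_one, one_mul, EuclideanSpace.dist_eq, EuclideanSpace.dist_eq]
  apply Real.sqrt_le_sqrt
  calc ∑ i : Fin k, dist (z ⟨i.1, lt_trans i.2 hkn⟩) (w ⟨i.1, lt_trans i.2 hkn⟩) ^ 2
      = ∑ j ∈ Finset.univ.image (fun i : Fin k => (⟨i.1, lt_trans i.2 hkn⟩ : Fin n)),
          dist (z j) (w j) ^ 2 := by
        rw [Finset.sum_image]
        intro a _ b _ hab
        simp only [Fin.mk.injEq] at hab
        exact Fin.ext hab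
    _ ≤ ∑ j : Fin n, dist (z j) (w j) ^ 2 :=
        Finset.sum_le_sum_of_subset_of_nonneg (Finset.subset_univ _)
          (fun j _ _ => sq_nonneg _)


open scoped NNReal in
lemma hausdorff_euclid_bound {k : ℕ} (hk : 1 ≤ k) :
    ∃ C : ℝ≥0∞, C ≠ 0 ∧ C ≠ ∞ ∧
      ∀ s : Set (En k), μH[(k:ℝ)] s ≤ C * EMetric.diam s ^ (k:ℝ) := by
  set K : ℝ≥0 := ((Fintype.card (Fin k) : ℝ≥0) ^ (((1:ℝ≥0∞)/2).toReal)) + 1 with hK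
  have hK1 : (1:ℝ≥0) ≤ K := le_add_self
  set C : ℝ≥0∞ := (K:ℝ≥0∞)^(k:ℝ) * ENNReal.ofReal ((2:ℝ)^k) with hC
  have hC0 : C ≠ 0 := by
    apply mul_ne_zero
    · simp only [ne_eq, ENNReal.rpow_eq_zero_iff, not_or, not_and]
      constructor
      · intro h0
        rw [ENNReal.coe_eq_zero] at h0
        exact absurd (h0 ▸ hK1) (by norm_num)
      · intro htop
        exact (ENNReal.coe_ne_top htop).elim
    · rw [ne_eq, ENNReal.ofReal_eq_zero, not_le]
      positivity
  have hCt : C ≠ ∞ :=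
    ENNReal.mul_ne_top (by simp [ENNReal.rpow_eq_top_iff]) ENNReal.ofReal_ne_top
  refine ⟨C, hC0, hCt, ?_⟩
  intro s
  rcases eq_empty_or_nonempty s with rfl | ⟨x₀, hx₀⟩
  · simp
  rcases eq_or_ne (EMetric.diam s) ∞ with hdiam | hdiam
  · have hkpos : (0:ℝ) < (k:ℝ) := by exact_mod_cast hk
    rw [hdiam, ENNReal.top_rpow_of_pos hkpos, ENNReal.mul_top hC0]
    exact le_top
  -- the equivalence with the sup-norm pi space
  set e : En k ≃ (Fin k → ℝ) := WithLp.equiv 2 (Fin k → ℝ) with he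
  have hesymm : LipschitzWith K e.symm := by
    intro a b
    calc edist (e.symm a) (e.symm b)
        ≤ ((Fintype.card (Fin k) : ℝ≥0) ^ (((1:ℝ≥0∞)/2).toReal) : ℝ≥0)
            * edist (e (e.symm a)) (e (e.symm b)) :=
          PiLp.antilipschitzWith_ofLp 2 (fun _ : Fin k => ℝ) (e.symm a) (e.symm b)
      _ ≤ (K : ℝ≥0∞) * edist a b := by
          rw [Equiv.apply_symm_apply, Equiv.apply_symm_apply]
          gcongr ?_ * ?_
          · exact ENNReal.coe_le_coe.2 le_self_add
          · exact le_rfl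
  have hel : LipschitzWith 1 e := PiLp.lipschitzWith_ofLp 2 (fun _ : Fin k => ℝ)
  have hHpi : (μH[(k:ℝ)] : Measure (Fin k → ℝ)) = volume := by
    rw [show ((k:ℝ)) = ((Fintype.card (Fin k) : ℕ) : ℝ) by simp]
    exact hausdorffMeasure_pi_real
  set d : ℝ := (EMetric.diam s).toReal with hd
  have hd0 : 0 ≤ d := ENNReal.toReal_nonneg
  have hsub : e '' s ⊆ Metric.closedBall (e x₀) d := by
    rintro _ ⟨y, hy, rfl⟩
    rw [Metric.mem_closedBall, dist_edist]
    have h1 : edist (e y) (e x₀) ≤ EMetric.diam s := by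
      calc edist (e y) (e x₀) ≤ 1 * edist y x₀ := hel y x₀
        _ = edist y x₀ := by simp
        _ ≤ EMetric.diam s := EMetric.edist_le_diam_of_mem hy hx₀
    exact ENNReal.toReal_mono hdiam h1
  calc μH[(k:ℝ)] s = μH[(k:ℝ)] (e.symm '' (e '' s)) := by
        rw [Equiv.symm_image_image]
    _ ≤ (K:ℝ≥0∞)^(k:ℝ) * μH[(k:ℝ)] (e '' s) :=
        hesymm.hausdorffMeasure_image_le (by positivity) _
    _ ≤ (K:ℝ≥0∞)^(k:ℝ) * volume (Metric.closedBall (e x₀) d) := by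
        rw [hHpi]; gcongr
    _ = (K:ℝ≥0∞)^(k:ℝ) * ENNReal.ofReal ((2*d)^(Fintype.card (Fin k))) := by
        rw [Real.volume_pi_closedBall _ hd0]
    _ ≤ (K:ℝ≥0∞)^(k:ℝ) * (ENNReal.ofReal ((2:ℝ)^k) * EMetric.diam s ^ (k:ℝ)) := by
        gcongr
        rw [Fintype.card_fin, mul_pow, ENNReal.ofReal_mul (by positivity),
          ENNReal.ofReal_pow hd0, ENNReal.ofReal_toReal hdiam, ENNReal.rpow_natCast]
    _ = (K:ℝ≥0∞)^(k:ℝ) * ENNReal.ofReal ((2:ℝ)^k) * EMetric.diam s ^ (k:ℝ) := by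
        rw [mul_assoc]


theorem stmt0' {n k : ℕ} (hk1 : 1 ≤ k) (hkn : k < n) (α : ℝ) (hα : 0 ≤ α)
    (C : ℝ≥0∞) (hC0 : C ≠ 0) (hCt : C ≠ ∞)
    (hCb : ∀ s : Set (En k), μH[(k:ℝ)] s ≤ C * EMetric.diam s ^ (k:ℝ))
    (E : Set (En n)) (h : μH[(k : ℝ) + α] E = 0) :
    ∀ᵐ x ∂(μH[(k : ℝ)] : Measure (En k)),
      μH[α] (E ∩ (fun z : En n => (WithLp.toLp 2 (fun i : Fin k => z ⟨i.1, lt_trans i.2 hkn⟩) : En k)) ⁻¹' {x})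
        = 0 := by
  classical
  have hπl := proj_lipschitz hkn
  set π : En n → En k := fun z => WithLp.toLp 2 (fun i : Fin k => z ⟨i.1, lt_trans i.2 hkn⟩) with hπ
  have hd0 : (0:ℝ) < (k:ℝ) + α := by
    have h1 : (1:ℝ) ≤ (k:ℝ) := by exact_mod_cast hk1
    linarith
  have hk0 : (0:ℝ) ≤ (k:ℝ) := by positivity
  rw [Measure.hausdorffMeasure_apply] at h
  -- Step 1: good covers of E
  have hcov : ∀ m : ℕ, ∃ t : ℕ → Set (En n), (E ⊆ ⋃ i, t i) ∧
      (∀ i, EMetric.diam (t i) ≤ ((m:ℝ≥0∞) + 1)⁻¹) ∧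
      ∑' i, EMetric.diam (t i) ^ ((k:ℝ) + α) ≤ C⁻¹ * 2⁻¹ ^ m := by
    intro m
    have hεpos : (0:ℝ≥0∞) < C⁻¹ * 2⁻¹ ^ m := by
      apply ENNReal.mul_pos
      · exact ENNReal.inv_ne_zero.2 hCt
      · exact pow_ne_zero m (by simp)
    have hrpos : (0:ℝ≥0∞) < ((m:ℝ≥0∞) + 1)⁻¹ :=
      ENNReal.inv_pos.2 (by simp)
    have hlt : (⨅ (t : ℕ → Set (En n)) (_ : E ⊆ ⋃ i, t i)
        (_ : ∀ i, EMetric.diam (t i) ≤ ((m:ℝ≥0∞) + 1)⁻¹),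
        ∑' i, ⨆ _ : (t i).Nonempty, EMetric.diam (t i) ^ ((k:ℝ) + α))
        < C⁻¹ * 2⁻¹ ^ m := by
      refine lt_of_le_of_lt ?_ hεpos
      rw [← h]
      exact le_iSup₂ (f := fun (r : ℝ≥0∞) (_ : 0 < r) =>
        ⨅ (t : ℕ → Set (En n)) (_ : E ⊆ ⋃ i, t i)
          (_ : ∀ i, EMetric.diam (t i) ≤ r),
          ∑' i, ⨆ _ : (t i).Nonempty, EMetric.diam (t i) ^ ((k:ℝ) + α))
        ((m:ℝ≥0∞) + 1)⁻¹ hrpos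
    rw [iInf_lt_iff] at hlt
    obtain ⟨t, hlt⟩ := hlt
    rw [iInf_lt_iff] at hlt
    obtain ⟨ht1, hlt⟩ := hlt
    rw [iInf_lt_iff] at hlt
    obtain ⟨ht2, hlt⟩ := hlt
    refine ⟨t, ht1, ht2, le_trans (ENNReal.tsum_le_tsum fun i => ?_) hlt.le⟩
    rcases eq_empty_or_nonempty (t i) with hemp | hne
    · rw [hemp, show EMetric.diam (∅ : Set (En n)) = 0 from Metric.ediam_empty, ENNReal.zero_rpow_of_pos hd0]
      exact zero_le
    · exact le_iSup_of_le hne le_rfl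
  choose t hcov1 hcov2 hcov3 using hcov
  -- Step 2: the dominating functions
  set g : ℕ → En k → ℝ≥0∞ := fun m x =>
    ∑' i, (closure (π '' t m i)).indicator (fun _ => EMetric.diam (t m i) ^ α) x with hg
  have hgm : ∀ m, Measurable (g m) := fun m =>
    Measurable.ennreal_tsum fun i =>
      measurable_const.indicator isClosed_closure.measurableSet
  have hdiam_ne : ∀ m i, EMetric.diam (t m i) ≠ ∞ := fun m i =>
    ne_top_of_le_ne_top (by simp) (hcov2 m i)
  have hint : ∀ m, ∫⁻ x, g m x ∂(μH[(k:ℝ)] : Measure (En k)) ≤ 2⁻¹ ^ m := by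
    intro m
    rw [hg]
    simp only
    rw [lintegral_tsum (fun i =>
      (measurable_const.indicator isClosed_closure.measurableSet).aemeasurable)]
    have hterm : ∀ i, ∫⁻ x, (closure (π '' t m i)).indicator
        (fun _ => EMetric.diam (t m i) ^ α) x ∂(μH[(k:ℝ)] : Measure (En k))
        ≤ C * EMetric.diam (t m i) ^ ((k:ℝ) + α) := by
      intro i
      rw [lintegral_indicator_const isClosed_closure.measurableSet]
      have hmeas : μH[(k:ℝ)] (closure (π '' t m i)) ≤ C * EMetric.diam (t m i) ^ (k:ℝ) := by
        refine le_trans (hCb _) ?_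
        gcongr
        rw [show EMetric.diam (closure (π '' t m i)) = EMetric.diam (π '' t m i) from Metric.ediam_closure _]
        calc EMetric.diam (π '' t m i) ≤ 1 * EMetric.diam (t m i) := hπl.ediam_image_le _
          _ = EMetric.diam (t m i) := by simp
      calc EMetric.diam (t m i) ^ α * μH[(k:ℝ)] (closure (π '' t m i))
          ≤ EMetric.diam (t m i) ^ α * (C * EMetric.diam (t m i) ^ (k:ℝ)) := by gcongr
        _ ≤ C * EMetric.diam (t m i) ^ ((k:ℝ) + α) := by
            rcases eq_or_ne (EMetric.diam (t m i)) 0 with h0 | h0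
            · rw [h0]
              simp [ENNReal.zero_rpow_of_pos hd0,
                ENNReal.zero_rpow_of_pos (show (0:ℝ) < (k:ℝ) by positivity)]
            · rw [ENNReal.rpow_add _ _ h0 (hdiam_ne m i)]
              exact le_of_eq (by ring)
    calc ∑' i, ∫⁻ x, (closure (π '' t m i)).indicator
          (fun _ => EMetric.diam (t m i) ^ α) x ∂(μH[(k:ℝ)] : Measure (En k))
        ≤ ∑' i, C * EMetric.diam (t m i) ^ ((k:ℝ) + α) := ENNReal.tsum_le_tsum hterm
      _ = C * ∑' i, EMetric.diam (t m i) ^ ((k:ℝ) + α) := ENNReal.tsum_mul_left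
      _ ≤ C * (C⁻¹ * 2⁻¹ ^ m) := by gcongr; exact hcov3 m
      _ = 2⁻¹ ^ m := by rw [← mul_assoc, ENNReal.mul_inv_cancel hC0 hCt, one_mul]
  -- Step 3: a.e. convergence to zero
  have htot : ∫⁻ x, ∑' m, g m x ∂(μH[(k:ℝ)] : Measure (En k)) ≠ ∞ := by
    rw [lintegral_tsum (fun m => (hgm m).aemeasurable)]
    refine ne_top_of_le_ne_top ?_ (ENNReal.tsum_le_tsum hint)
    rw [ENNReal.tsum_geometric]
    simp [ENNReal.one_sub_inv_two]
  have hfin := ae_lt_top (Measurable.ennreal_tsum hgm) htot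
  filter_upwards [hfin] with x hx
  have hx0 : Tendsto (fun m => g m x) atTop (𝓝 0) :=
    ENNReal.tendsto_atTop_zero_of_tsum_ne_top hx.ne
  -- Step 4: conclude for the fiber of x
  rw [← nonpos_iff_eq_zero, Measure.hausdorffMeasure_apply]
  refine iSup₂_le fun r hr => ?_
  obtain ⟨M, hM⟩ : ∃ M : ℕ, ((M:ℝ≥0∞) + 1)⁻¹ ≤ r := by
    rcases eq_or_ne r ∞ with rfl | hrt
    · exact ⟨0, le_top⟩
    · obtain ⟨M, hM⟩ := ENNReal.exists_inv_nat_lt hr.ne'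
      refine ⟨M, le_trans (ENNReal.inv_le_inv' (by simp)) hM.le⟩
  have key : ∀ m, M ≤ m →
      (⨅ (t' : ℕ → Set (En n)) (_ : E ∩ π ⁻¹' {x} ⊆ ⋃ i, t' i)
        (_ : ∀ i, EMetric.diam (t' i) ≤ r),
        ∑' i, ⨆ _ : (t' i).Nonempty, EMetric.diam (t' i) ^ α) ≤ g m x := by
    intro m hm
    set u : ℕ → Set (En n) := fun i => t m i ∩ π ⁻¹' {x} with hu
    have hu1 : E ∩ π ⁻¹' {x} ⊆ ⋃ i, u i := by
      intro y hy
      obtain ⟨j, hj⟩ := mem_iUnion.1 (hcov1 m hy.1)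
      exact mem_iUnion.2 ⟨j, hj, hy.2⟩
    have hu2 : ∀ i, EMetric.diam (u i) ≤ r := by
      intro i
      refine le_trans (EMetric.diam_mono inter_subset_left) (le_trans (hcov2 m i) ?_)
      refine le_trans ?_ hM
      exact ENNReal.inv_le_inv' (by exact_mod_cast Nat.add_le_add_right hm 1)
    refine le_trans (iInf_le_of_le u (iInf_le_of_le hu1 (iInf_le_of_le hu2 le_rfl))) ?_
    refine ENNReal.tsum_le_tsum fun i => ?_
    refine iSup_le fun hne => ?_
    obtain ⟨y, hy⟩ := hne
    have hxmem : x ∈ closure (π '' t m i) :=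
      subset_closure ⟨y, hy.1, mem_singleton_iff.1 hy.2⟩
    rw [indicator_of_mem hxmem]
    exact ENNReal.rpow_le_rpow (EMetric.diam_mono inter_subset_left) hα
  exact ge_of_tendsto hx0 (eventually_atTop.2 ⟨M, key⟩)


/-- Federer's slicing theorem, part 1: if ℋ^{k+α}(E)=0 then ℋ^α of almost every fiber
of the projection onto the first k coordinates vanishes. -/
theorem stmt0 {n k : ℕ} (hn : 2 ≤ n) (hk1 : 1 ≤ k) (hkn : k < n) (α : ℝ) (hα : 0 ≤ α)
    (E : Set (En n)) (h : μH[(k : ℝ) + α] E = 0) :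
    ∀ᵐ x ∂(μH[(k : ℝ)] : Measure (En k)),
      μH[α] (E ∩ (fun z : En n => (WithLp.toLp 2 (fun i : Fin k => z ⟨i.1, lt_trans i.2 hkn⟩) : En k)) ⁻¹' {x})
        = 0 := by
  obtain ⟨C, hC0, hCt, hCb⟩ := hausdorff_euclid_bound hk1
  exact stmt0' hk1 hkn α hα C hC0 hCt hCb E h
end
end

section
/- The function u : ℝ⁴ → ℝ defined by u(x₁,y₁,x₂,y₂) = 1 + x₁ for x₁ < 0 and 1 − x₁ for x₁ ≥ 0 is continuous on ℝ⁴ and separately harmonic on ℝ⁴ \ ({0} × ℝ³) (harmonic in (x₁,y₁) for each fixed (x₂,y₂), and harmonic in (x₂,y₂) for each fixed (x₁,y₁)), but u is not separately subharmonic on ℝ⁴. -/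
noncomputable section
open MeasureTheory Metric Filter Topology Set
open scoped ENNReal

/-- u(x₁,y₁,x₂,y₂) = 1+x₁ (x₁<0), 1−x₁ (x₁≥0) on ℝ⁴. -/
def u4 : En 4 → ℝ := fun x => if x 0 < 0 then 1 + x 0 else 1 - x 0

/-- The slice (x₁,y₁) ↦ (x₁,y₁,a,b). -/
def e12 (a b : ℝ) (z : En 2) : En 4 :=
  WithLp.toLp 2 (fun i => if i = 0 then z 0 else if i = 1 then z 1 else if i = 2 then a else b)

/-- The slice (x₂,y₂) ↦ (c,d,x₂,y₂). -/
def e34 (c d : ℝ) (z : En 2) : En 4 :=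
  WithLp.toLp 2 (fun i => if i = 0 then c else if i = 1 then d else if i = 2 then z 0 else z 1)


/-! ### Auxiliary machinery -/

def P : En 2 →L[ℝ] ℝ := EuclideanSpace.proj (0:Fin 2)

lemma P_apply (z : En 2) : P z = z 0 := rfl

/-- the slice function 1 - |z₁| -/
def fm : En 2 → ℝ := fun z => 1 - |P z|

lemma u4_eq (x : En 4) : u4 x = 1 - |x 0| := by
  unfold u4
  split_ifs with h
  · rw [abs_of_neg h]; ring
  · rw [abs_of_nonneg (not_lt.1 h)]

lemma slice12 (a b : ℝ) : (fun z => u4 (e12 a b z)) = fm := by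
  funext z
  rw [u4_eq, show (e12 a b z) 0 = z 0 from rfl, fm, P_apply]

lemma slice34 (c d : ℝ) : (fun z => u4 (e34 c d z)) = fun _ : En 2 => 1 - |c| := by
  funext z
  rw [u4_eq, show (e34 c d z) 0 = c from rfl]

lemma harm_const (k : ℝ) (s : Set (En 2)) : HarmOn (fun _ => k) s := by
  refine ⟨contDiffOn_const, fun x _ => ?_⟩
  have h : ∀ j : Fin 2, partial2 j (fun _ => k) x = 0 := by
    intro j
    simp [partial2, fderiv_const]
  simp [lapAt, h]

lemma fderiv_fm_neg {y : En 2} (hy : P y < 0) : fderiv ℝ fm y = P := by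
  have hev : fm =ᶠ[𝓝 y] fun z => 1 + P z := by
    filter_upwards [(isOpen_Iio.preimage P.continuous).mem_nhds hy] with z hz
    simp only [fm, abs_of_neg (show P z < 0 from hz)]; ring
  rw [hev.fderiv_eq]
  exact ((P.hasFDerivAt).const_add 1).fderiv

lemma fderiv_fm_pos {y : En 2} (hy : 0 < P y) : fderiv ℝ fm y = -P := by
  have hev : fm =ᶠ[𝓝 y] fun z => 1 - P z := by
    filter_upwards [(isOpen_Ioi.preimage P.continuous).mem_nhds hy] with z hz
    simp only [fm, abs_of_pos (show 0 < P z from hz)]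
  rw [hev.fderiv_eq]
  exact ((P.hasFDerivAt).const_sub 1).fderiv

lemma harm_fm : HarmOn fm {z : En 2 | z 0 ≠ 0} := by
  constructor
  · intro x hx
    rcases lt_or_gt_of_ne (show P x ≠ 0 from hx) with h | h
    · have hev : fm =ᶠ[𝓝 x] fun z => 1 + P z := by
        filter_upwards [(isOpen_Iio.preimage P.continuous).mem_nhds h] with z hz
        simp only [fm, abs_of_neg (show P z < 0 from hz)]; ring
      exact (((contDiff_const.add P.contDiff).contDiffAt).congr_of_eventuallyEq
        hev).contDiffWithinAt
    · have hev : fm =ᶠ[𝓝 x] fun z => 1 - P z := by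
        filter_upwards [(isOpen_Ioi.preimage P.continuous).mem_nhds h] with z hz
        simp only [fm, abs_of_pos (show 0 < P z from hz)]
      exact (((contDiff_const.sub P.contDiff).contDiffAt).congr_of_eventuallyEq
        hev).contDiffWithinAt
  · intro x hx
    have key : ∀ j : Fin 2, partial2 j fm x = 0 := by
      intro j
      rcases lt_or_gt_of_ne (show P x ≠ 0 from hx) with h | h
      · have hev : (fun y => fderiv ℝ fm y (EuclideanSpace.single j 1))
            =ᶠ[𝓝 x] fun _ => P (EuclideanSpace.single j 1) := by
          filter_upwards [(isOpen_Iio.preimage P.continuous).mem_nhds h] with z hz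
          rw [fderiv_fm_neg hz]
        rw [partial2, hev.fderiv_eq]
        simp
      · have hev : (fun y => fderiv ℝ fm y (EuclideanSpace.single j 1))
            =ᶠ[𝓝 x] fun _ => (-P) (EuclideanSpace.single j 1) := by
          filter_upwards [(isOpen_Ioi.preimage P.continuous).mem_nhds h] with z hz
          rw [fderiv_fm_pos hz]
        rw [partial2, hev.fderiv_eq]
        simp
    simp [lapAt, key]

lemma coord_le_dist {n : ℕ} (i : Fin n) (x y : En n) : |x i - y i| ≤ dist x y := by
  rw [EuclideanSpace.dist_eq]
  calc |x i - y i| = Real.sqrt (dist (x i) (y i) ^ 2) := by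
        rw [Real.sqrt_sq_eq_abs, Real.dist_eq, abs_abs]
    _ ≤ _ := Real.sqrt_le_sqrt (Finset.single_le_sum (f := fun j => dist (x j) (y j) ^ 2)
        (fun j _ => sq_nonneg _) (Finset.mem_univ i))

lemma avg_lt : ⨍ y in closedBall (0:En 2) 1, fm y < 1 := by
  set A := closedBall (0:En 2) 1 with hA
  have hA0 : volume A ≠ 0 := (measure_closedBall_pos volume _ one_pos).ne'
  have hAt : volume A ≠ ⊤ := measure_closedBall_lt_top.ne
  have hv : (0:ℝ) < (volume A).toReal := ENNReal.toReal_pos hA0 hAt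
  have hg : IntegrableOn (fun y : En 2 => |P y|) A volume :=
    (P.continuous.abs.locallyIntegrable (μ := volume)).integrableOn_isCompact
      (isCompact_closedBall _ _)
  have hc : IntegrableOn (fun _ : En 2 => (1:ℝ)) A volume :=
    integrableOn_const (measure_closedBall_lt_top).ne
  have hint : 0 < ∫ y in A, |P y| := by
    rw [setIntegral_pos_iff_support_of_nonneg_ae
      (Filter.Eventually.of_forall fun y => abs_nonneg _) hg]
    set c : En 2 := EuclideanSpace.single (0:Fin 2) (1/2 : ℝ) with hc'
    have hsub : ball c (1/4 : ℝ) ⊆ Function.support (fun y : En 2 => |P y|) ∩ A := by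
      intro y hy
      have hdy : dist y c < 1/4 := mem_ball.1 hy
      have h0 : |y 0 - c 0| ≤ dist y c := coord_le_dist 0 y c
      have hc0 : c 0 = 1/2 := by simp [hc', EuclideanSpace.single_apply]
      constructor
      · have : y 0 > 0 := by
          have := abs_sub_lt_iff.1 (lt_of_le_of_lt h0 hdy)
          rw [hc0] at this; linarith [this.2]
        simp only [Function.mem_support]
        have : P y ≠ 0 := by rw [show P y = y 0 from rfl]; exact this.ne'
        exact abs_ne_zero.2 this
      · have hcn : dist c (0:En 2) = 1/2 := by
          rw [dist_zero_right, hc', EuclideanSpace.norm_single]; norm_num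
        have : dist y (0:En 2) ≤ dist y c + dist c 0 := dist_triangle _ _ _
        exact mem_closedBall.2 (by linarith)
    calc (0:ℝ≥0∞) < volume (ball c (1/4:ℝ)) := measure_ball_pos volume c (by norm_num)
      _ ≤ _ := measure_mono hsub
  have hsplit : ∫ y in A, fm y = (volume A).toReal - ∫ y in A, |P y| := by
    rw [show fm = fun y => (1:ℝ) - |P y| from rfl, integral_sub hc hg]
    simp [setIntegral_const]
    rfl
  rw [setAverage_eq, hsplit, smul_eq_mul, mul_sub, Measure.real, inv_mul_cancel₀ hv.ne']
  have : 0 < (volume A).toReal⁻¹ * ∫ y in A, |P y| := by positivity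
  linarith


/-- Example 3: u is continuous on ℝ⁴, separately harmonic on ℝ⁴ \ ({0}×ℝ³),
but not separately subharmonic on ℝ⁴. -/
theorem stmt16 :
    Continuous u4 ∧
    (∀ a b : ℝ, HarmOn (fun z => u4 (e12 a b z)) {z : En 2 | z 0 ≠ 0}) ∧
    (∀ c d : ℝ, c ≠ 0 → HarmOn (fun z => u4 (e34 c d z)) (Set.univ : Set (En 2))) ∧
    ¬ ((∀ a b : ℝ, SubhR (fun z => u4 (e12 a b z)) (Set.univ : Set (En 2))) ∧
       (∀ c d : ℝ, SubhR (fun z => u4 (e34 c d z)) (Set.univ : Set (En 2)))) := by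
  constructor
  · have : u4 = fun x => 1 - |x 0| := funext u4_eq
    rw [this]
    exact continuous_const.sub (EuclideanSpace.proj (0 : Fin 4)).continuous.abs
  refine ⟨?_, ?_, ?_⟩
  · intro a b; rw [slice12]; exact harm_fm
  · intro c d _; rw [slice34]; exact harm_const _ _
  · rintro ⟨H1, -⟩
    have h := (H1 0 0).2.2 0 (mem_univ _) 1 one_pos (subset_univ _)
    rw [slice12] at h
    have h0 : fm 0 = 1 := by simp [fm]
    rw [h0] at h
    exact absurd h (not_le.2 avg_lt)
end
end
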